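/- Fix an integer K ≥ 2. The image p(R_K) of R_K under the mapping p is exactly the open interval (0, 2/3); in particular, for every t ∈ (0, 2/3) there exists r ∈ R_K with p(r) = t. -/

import Mathlib

set_option maxHeartbeats 1000000

/-- The image `p(R_K)` of `R_K` under the mapping `p` is exactly the open interval
`(0, 2/3)` (names indexed by `0, 1, …, K-1`, with `n₁` corresponding to index `0`). -/
theorem image_p_RK_eq_Ioo
    (K : ℕ) (hK : 2 ≤ K) :
    {t : ℝ | ∃ r : ℕ → ℝ,
        (∀ k < K, r k ∈ Set.Ioo (0 : ℝ) 1) ∧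
        (∑ k ∈ Finset.range K, r k = 1) ∧
        (∀ i j, 1 ≤ i → i ≤ j → j < K → r j ≤ r i) ∧
        t = 2 / (3 + ∑ k ∈ Finset.Ico 1 K, r k / (1 - r k))}
      = Set.Ioo (0 : ℝ) (2 / 3) := by
  ext t
  simp only [Set.mem_setOf_eq, Set.mem_Ioo]
  constructor
  · rintro ⟨r, hr, hsum, hmono, ht⟩
    have hpos : ∀ k ∈ Finset.Ico 1 K, 0 < r k / (1 - r k) := by
      intro k hk
      rw [Finset.mem_Ico] at hk
      have h := hr k hk.2
      exact div_pos h.1 (by linarith [h.2])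
    have hS : 0 < ∑ k ∈ Finset.Ico 1 K, r k / (1 - r k) :=
      Finset.sum_pos hpos ⟨1, Finset.mem_Ico.mpr ⟨le_refl 1, by omega⟩⟩
    refine ⟨by rw [ht]; positivity, ?_⟩
    rw [ht, div_lt_div_iff₀ (by linarith) (by norm_num)]
    linarith
  · rintro ⟨ht0, ht23⟩
    obtain ⟨S, hSdef⟩ : ∃ S : ℝ, S = 2 / t - 3 := ⟨_, rfl⟩
    have hS : 0 < S := by
      have : 3 < 2 / t := by rw [lt_div_iff₀ ht0]; linarith
      rw [hSdef]; linarith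
    have hK2 : (2 : ℝ) ≤ (K : ℝ) := by exact_mod_cast hK
    obtain ⟨m, hmdef⟩ : ∃ m : ℝ, m = (K : ℝ) - 1 := ⟨_, rfl⟩
    have hm1 : 1 ≤ m := by rw [hmdef]; linarith
    obtain ⟨n, hndef⟩ : ∃ n : ℝ, n = (K : ℝ) - 2 := ⟨_, rfl⟩
    have hn0 : 0 ≤ n := by rw [hndef]; linarith
    have hnm : n ≤ m := by rw [hndef, hmdef]; linarith
    obtain ⟨ε, hεdef⟩ : ∃ ε : ℝ,
        ε = min (min (1/2) (S / (4 * m))) (min (1 / (2 * m * (1 + S))) (S / (S + 2))) := ⟨_, rfl⟩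
    have hε0 : 0 < ε := by
      rw [hεdef]; apply lt_min <;> apply lt_min <;> positivity
    have hεhalf : ε ≤ 1 / 2 := by
      rw [hεdef]; exact le_trans (min_le_left _ _) (min_le_left _ _)
    have hε2 : ε * (4 * m) ≤ S := by
      have h : ε ≤ S / (4 * m) := by
        rw [hεdef]; exact le_trans (min_le_left _ _) (min_le_right _ _)
      rw [← le_div_iff₀ (by positivity)]; exact h
    have hε3 : ε * (2 * m * (1 + S)) ≤ 1 := by
      have h : ε ≤ 1 / (2 * m * (1 + S)) := by
        rw [hεdef]; exact le_trans (min_le_right _ _) (min_le_left _ _)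
      rw [← le_div_iff₀ (by positivity)]; exact h
    have hε4 : ε * (S + 2) ≤ S := by
      have h : ε ≤ S / (S + 2) := by
        rw [hεdef]; exact le_trans (min_le_right _ _) (min_le_right _ _)
      rw [← le_div_iff₀ (by positivity)]; exact h
    have hε1 : ε < 1 := by linarith
    have h1ε : (0:ℝ) < 1 - ε := by linarith
    obtain ⟨δ, hδdef⟩ : ∃ δ : ℝ, δ = n * ε / (1 - ε) := ⟨_, rfl⟩
    have hδ0 : 0 ≤ δ := by rw [hδdef]; positivity
    have hδS : δ ≤ S / 2 := by
      rw [hδdef, div_le_iff₀ h1ε]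
      have h1 : n * ε ≤ m * ε := by nlinarith
      have h2 : m * ε ≤ S / 4 := by nlinarith
      nlinarith
    obtain ⟨T, hTdef⟩ : ∃ T : ℝ, T = S - δ := ⟨_, rfl⟩
    have hT1 : S / 2 ≤ T := by rw [hTdef]; linarith
    have hT2 : T ≤ S := by rw [hTdef]; linarith
    have hT0 : 0 < T := by linarith
    have h1T : (0:ℝ) < 1 + T := by linarith
    obtain ⟨a, hadef⟩ : ∃ a : ℝ, a = T / (1 + T) := ⟨_, rfl⟩
    have ha0 : 0 < a := by rw [hadef]; positivity
    have ha1 : a < 1 := by rw [hadef, div_lt_one h1T]; linarith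
    have h1a : 1 - a = 1 / (1 + T) := by
      rw [hadef]; field_simp; ring
    have hεa : ε ≤ a := by
      rw [hadef, le_div_iff₀ h1T]
      nlinarith [mul_nonneg (by linarith : (0:ℝ) ≤ 2 * T - S) (by linarith : (0:ℝ) ≤ 1 - ε)]
    have hna : n * ε + a < 1 := by
      have h1 : n * ε ≤ m * ε := by nlinarith
      have h3 : (1:ℝ) / (1 + S) ≤ 1 - a := by
        rw [h1a, div_le_div_iff₀ (by linarith) h1T]
        linarith
      have h4 : m * ε < 1 / (1 + S) := by
        rw [lt_div_iff₀ (by linarith)]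
        have hp : 0 < m * ε * (1 + S) := by
          have hm0 : (0:ℝ) < m := by linarith
          positivity
        nlinarith [hε3, hp]
      linarith
    refine ⟨fun k => if k = 0 then 1 - a - n * ε else if k = 1 then a else ε, ?_, ?_, ?_, ?_⟩
    · intro k hk
      rcases Nat.eq_zero_or_pos k with rfl | hk0
      · simp only [if_pos rfl, eq_self_iff_true, if_true]
        constructor <;> [linarith; nlinarith [mul_nonneg hn0 hε0.le]]
      rcases eq_or_lt_of_le (show 1 ≤ k from hk0) with h1 | h2
      · simp only [← h1, if_neg (by omega : (1:ℕ) ≠ 0), if_pos rfl, eq_self_iff_true, if_true]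
        exact ⟨ha0, ha1⟩
      · simp only [if_neg (by omega : k ≠ 0), if_neg (by omega : k ≠ 1)]
        exact ⟨hε0, hε1⟩
    · have hins0 : Finset.range K = insert 0 (Finset.Ico 1 K) := by
        ext x; simp [Finset.mem_Ico]; omega
      have hins1 : Finset.Ico 1 K = insert 1 (Finset.Ico 2 K) := by
        ext x; simp [Finset.mem_Ico]; omega
      rw [hins0, Finset.sum_insert (by simp), hins1, Finset.sum_insert (by simp)]
      have hcongr : ∀ x ∈ Finset.Ico 2 K,
          (if x = 0 then 1 - a - n * ε else if x = 1 then a else ε) = ε := by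
        intro x hx
        rw [Finset.mem_Ico] at hx
        simp only [if_neg (by omega : x ≠ 0), if_neg (by omega : x ≠ 1)]
      have hcard : ((K - 2 : ℕ) : ℝ) = (K : ℝ) - 2 := by
        push_cast [Nat.cast_sub hK]; ring
      have hconst : ∑ k ∈ Finset.Ico 2 K,
          (if k = 0 then 1 - a - n * ε else if k = 1 then a else ε) = n * ε := by
        rw [Finset.sum_congr rfl hcongr, Finset.sum_const, Nat.card_Ico,
          nsmul_eq_mul, hcard, hndef]
      rw [hconst]
      simp only [if_pos rfl, if_neg (by omega : (1:ℕ) ≠ 0), eq_self_iff_true, if_true]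
      ring
    · intro i j hi hij hjK
      rcases eq_or_lt_of_le hi with h1 | h2
      · rcases eq_or_lt_of_le hij with h3 | h4
        · rw [h3]
        · simp only [← h1, if_neg (by omega : j ≠ 0), if_neg (by omega : j ≠ 1),
            if_neg (by omega : (1:ℕ) ≠ 0), if_pos rfl]
          exact hεa
      · have hj2 : 2 ≤ j := by omega
        simp only [if_neg (by omega : i ≠ 0), if_neg (by omega : i ≠ 1),
          if_neg (by omega : j ≠ 0), if_neg (by omega : j ≠ 1), le_refl]
    · have hins1 : Finset.Ico 1 K = insert 1 (Finset.Ico 2 K) := by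
        ext x; simp [Finset.mem_Ico]; omega
      rw [hins1, Finset.sum_insert (by simp)]
      have hcongr : ∀ x ∈ Finset.Ico 2 K,
          ((if x = 0 then 1 - a - n * ε else if x = 1 then a else ε) /
            (1 - (if x = 0 then 1 - a - n * ε else if x = 1 then a else ε))) = ε / (1 - ε) := by
        intro x hx
        rw [Finset.mem_Ico] at hx
        simp only [if_neg (by omega : x ≠ 0), if_neg (by omega : x ≠ 1)]
      have hcard : ((K - 2 : ℕ) : ℝ) = (K : ℝ) - 2 := by
        push_cast [Nat.cast_sub hK]; ring
      have hconst : ∑ k ∈ Finset.Ico 2 K,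
          ((if k = 0 then 1 - a - n * ε else if k = 1 then a else ε) /
            (1 - (if k = 0 then 1 - a - n * ε else if k = 1 then a else ε))) = δ := by
        rw [Finset.sum_congr rfl hcongr, Finset.sum_const, Nat.card_Ico,
          nsmul_eq_mul, hcard, hδdef, hndef]
        ring
      rw [hconst]
      simp only [if_neg (by omega : (1:ℕ) ≠ 0), if_pos rfl, eq_self_iff_true, if_true]
      have haT : a / (1 - a) = T := by
        rw [h1a, hadef]
        field_simp
      rw [haT]
      have hTS : T + δ = S := by rw [hTdef]; ring
      rw [hTS, hSdef]
      field_simp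
      ring
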